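/- Let Θ_1 : ℤ[SL(2,ℤ)] → ℤ[ℙ¹(ℚ)] be the ℤ-linear map sending a group element γ to (γ·∞) − (γ·0), where SL(2,ℤ) acts on ℙ¹(ℚ) by Möbius transformations, ∞ = (1:0) and 0 = (0:1). Then: (i) the image of Θ_1 is exactly ℤ[ℙ¹(ℚ)]⁰, the kernel of the augmentation map ℤ[ℙ¹(ℚ)] → ℤ, Σ λ_p (p) ↦ Σ λ_p; (ii) the kernel of Θ_1 is the left ideal ℤ[SL(2,ℤ)](1+S) + ℤ[SL(2,ℤ)](1+U+U²) of the group ring ℤ[SL(2,ℤ)], where S = (0 −1; 1 0) and U = (0 1; −1 1). Equivalently, the sequence 0 → ℤ[SL(2,ℤ)](1+S) + ℤ[SL(2,ℤ)](1+U+U²) → ℤ[SL(2,ℤ)] → ℤ[ℙ¹(ℚ)]⁰ → 0 is exact. -/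

import Mathlib

noncomputable section

/-- `SL(2,ℤ)`. -/
abbrev SL2Z := Matrix.SpecialLinearGroup (Fin 2) ℤ

/-- The projective line `ℙ¹(ℚ)`. -/
abbrev P1Q := Projectivization ℚ (Fin 2 → ℚ)

/-- The Möbius action of `SL(2,ℤ)` on `ℙ¹(ℚ)`:
`(a b; c d)·(p:q) = (ap+bq : cp+dq)`. -/
def mobius (γ : SL2Z) (x : P1Q) : P1Q :=
  Projectivization.map
    ((Matrix.SpecialLinearGroup.toLin'
        (Matrix.SpecialLinearGroup.map (Int.castRingHom ℚ) γ)).toLinearMap)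
    (LinearEquiv.injective _) x

/-- The point `∞ = (1:0)` of `ℙ¹(ℚ)`. -/
def inftyP : P1Q :=
  Projectivization.mk ℚ ![1, 0] (by intro h; simpa using congrFun h 0)

/-- The point `0 = (0:1)` of `ℙ¹(ℚ)`. -/
def zeroP : P1Q :=
  Projectivization.mk ℚ ![0, 1] (by intro h; simpa using congrFun h 1)

/-- The `ℤ`-linear map `Θ₁ : ℤ[SL(2,ℤ)] → ℤ[ℙ¹(ℚ)]` sending a group element `γ` to
`(γ·∞) − (γ·0)`. -/
def Theta1 (x : MonoidAlgebra ℤ SL2Z) : P1Q →₀ ℤ :=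
  Finsupp.sum x.coeff fun γ c =>
    c • (Finsupp.single (mobius γ inftyP) 1 - Finsupp.single (mobius γ zeroP) 1)

/-- `S = (0 −1; 1 0)` as an element of `SL(2,ℤ)`. -/
def Sel : SL2Z := ⟨!![0, -1; 1, 0], by norm_num [Matrix.det_fin_two_of]⟩

/-- `U = (0 1; −1 1)` as an element of `SL(2,ℤ)`. -/
def Uel : SL2Z := ⟨!![0, 1; -1, 1], by norm_num [Matrix.det_fin_two_of]⟩

/-! ### Auxiliary infrastructure -/

section Aux

def vq (u : ℤ × ℤ) : Fin 2 → ℚ := ![(u.1 : ℚ), (u.2 : ℚ)]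

lemma vq_ne_zero {u : ℤ × ℤ} (hu : u ≠ 0) : vq u ≠ 0 := by
  intro h
  have h1 : (u.1 : ℚ) = 0 := by simpa [vq] using congrFun h 0
  have h2 : (u.2 : ℚ) = 0 := by simpa [vq] using congrFun h 1
  exact hu (Prod.ext (by exact_mod_cast h1) (by exact_mod_cast h2))

/-- integer pair to point of `P1Q`, junk value `inftyP` at `0`. -/
def pt (u : ℤ × ℤ) : P1Q :=
  if h : u = 0 then inftyP else Projectivization.mk ℚ (vq u) (vq_ne_zero h)

lemma pt_eq_mk {u : ℤ × ℤ} (hu : u ≠ 0) :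
    pt u = Projectivization.mk ℚ (vq u) (vq_ne_zero hu) := by
  simp [pt, hu]

lemma mk_eq_mk_of_eq {v w : Fin 2 → ℚ} (hv : v ≠ 0) (hw : w ≠ 0) (h : v = w) :
    Projectivization.mk ℚ v hv = Projectivization.mk ℚ w hw := by
  subst h; rfl

lemma pt_one_zero : pt (1, 0) = inftyP := by
  rw [pt_eq_mk (by simp)]
  exact mk_eq_mk_of_eq _ _ (by funext i; fin_cases i <;> simp [vq])

lemma pt_zero_one : pt (0, 1) = zeroP := by
  rw [pt_eq_mk (by simp)]
  exact mk_eq_mk_of_eq _ _ (by funext i; fin_cases i <;> simp [vq])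

/-- cross-product criterion -/
lemma pt_eq_pt_iff {u v : ℤ × ℤ} (hu : u ≠ 0) (hv : v ≠ 0) :
    pt u = pt v ↔ u.1 * v.2 = u.2 * v.1 := by
  rw [pt_eq_mk hu, pt_eq_mk hv, Projectivization.mk_eq_mk_iff']
  constructor
  · rintro ⟨a, ha⟩
    have h1 : (u.1 : ℚ) = a * v.1 := by simpa [vq] using congrFun ha.symm 0
    have h2 : (u.2 : ℚ) = a * v.2 := by simpa [vq] using congrFun ha.symm 1
    have : (u.1 : ℚ) * v.2 = (u.2 : ℚ) * v.1 := by rw [h1, h2]; ring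
    exact_mod_cast this
  · intro h
    have h' : (u.1 : ℚ) * v.2 = (u.2 : ℚ) * v.1 := by exact_mod_cast h
    have hv' : (v.1 : ℚ) ≠ 0 ∨ (v.2 : ℚ) ≠ 0 := by
      by_contra hc
      push_neg at hc
      exact hv (Prod.ext (by exact_mod_cast hc.1) (by exact_mod_cast hc.2))
    rcases hv' with h1 | h2
    · refine ⟨(u.1 : ℚ) / v.1, ?_⟩
      funext i; fin_cases i <;> simp [vq] <;> field_simp <;> linarith [h']
    · refine ⟨(u.2 : ℚ) / v.2, ?_⟩
      funext i; fin_cases i <;> simp [vq] <;> field_simp <;> linarith [h']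

lemma pt_neg {u : ℤ × ℤ} (hu : u ≠ 0) : pt (-u) = pt u := by
  rw [pt_eq_pt_iff (by simpa using hu) hu]
  simp; ring

def act (γ : SL2Z) (u : ℤ × ℤ) : ℤ × ℤ :=
  ((γ : Matrix (Fin 2) (Fin 2) ℤ) 0 0 * u.1 + (γ : Matrix (Fin 2) (Fin 2) ℤ) 0 1 * u.2,
   (γ : Matrix (Fin 2) (Fin 2) ℤ) 1 0 * u.1 + (γ : Matrix (Fin 2) (Fin 2) ℤ) 1 1 * u.2)

lemma detγ (γ : SL2Z) : (γ : Matrix (Fin 2) (Fin 2) ℤ) 0 0 * (γ : Matrix (Fin 2) (Fin 2) ℤ) 1 1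
    - (γ : Matrix (Fin 2) (Fin 2) ℤ) 0 1 * (γ : Matrix (Fin 2) (Fin 2) ℤ) 1 0 = 1 := by
  have := γ.2
  rwa [Matrix.det_fin_two] at this

lemma act_ne_zero (γ : SL2Z) {u : ℤ × ℤ} (hu : u ≠ 0) : act γ u ≠ 0 := by
  intro h
  have h1 := congrArg Prod.fst h
  have h2 := congrArg Prod.snd h
  simp only [act, Prod.fst_zero, Prod.snd_zero] at h1 h2
  have hd := detγ γ
  apply hu
  have e1 : u.1 = 0 := by
    linear_combination ((γ : Matrix (Fin 2) (Fin 2) ℤ) 1 1) * h1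
      - ((γ : Matrix (Fin 2) (Fin 2) ℤ) 0 1) * h2 - u.1 * hd
  have e2 : u.2 = 0 := by
    linear_combination ((γ : Matrix (Fin 2) (Fin 2) ℤ) 0 0) * h2
      - ((γ : Matrix (Fin 2) (Fin 2) ℤ) 1 0) * h1 - u.2 * hd
  exact Prod.ext e1 e2

lemma mobius_vq (γ : SL2Z) (u : ℤ × ℤ) :
    ((Matrix.SpecialLinearGroup.toLin'
        (Matrix.SpecialLinearGroup.map (Int.castRingHom ℚ) γ)).toLinearMap) (vq u)
      = vq (act γ u) := by
  funext i
  rw [LinearEquiv.coe_coe, Matrix.SpecialLinearGroup.toLin'_apply, Matrix.toLin'_apply]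
  rw [Matrix.SpecialLinearGroup.map_apply_coe]
  fin_cases i <;>
    simp [Matrix.mulVec, vq, act, Fin.sum_univ_two, RingHom.mapMatrix_apply,
      Matrix.vecHead, Matrix.vecTail]

lemma mobius_pt (γ : SL2Z) {u : ℤ × ℤ} (hu : u ≠ 0) :
    mobius γ (pt u) = pt (act γ u) := by
  rw [pt_eq_mk hu, pt_eq_mk (act_ne_zero γ hu)]
  unfold mobius
  rw [Projectivization.map_mk]
  exact mk_eq_mk_of_eq _ _ (mobius_vq γ u)

/-- the two columns of `γ` as points -/
def col1 (γ : SL2Z) : P1Q :=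
  pt ((γ : Matrix (Fin 2) (Fin 2) ℤ) 0 0, (γ : Matrix (Fin 2) (Fin 2) ℤ) 1 0)

def col2 (γ : SL2Z) : P1Q :=
  pt ((γ : Matrix (Fin 2) (Fin 2) ℤ) 0 1, (γ : Matrix (Fin 2) (Fin 2) ℤ) 1 1)

lemma col1_pair_ne (γ : SL2Z) :
    ((γ : Matrix (Fin 2) (Fin 2) ℤ) 0 0, (γ : Matrix (Fin 2) (Fin 2) ℤ) 1 0) ≠ (0 : ℤ × ℤ) := by
  intro h
  have h1 := congrArg Prod.fst h
  have h2 := congrArg Prod.snd h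
  simp only [Prod.fst_zero, Prod.snd_zero] at h1 h2
  have := detγ γ
  rw [h1, h2] at this
  simp at this

lemma col2_pair_ne (γ : SL2Z) :
    ((γ : Matrix (Fin 2) (Fin 2) ℤ) 0 1, (γ : Matrix (Fin 2) (Fin 2) ℤ) 1 1) ≠ (0 : ℤ × ℤ) := by
  intro h
  have h1 := congrArg Prod.fst h
  have h2 := congrArg Prod.snd h
  simp only [Prod.fst_zero, Prod.snd_zero] at h1 h2
  have := detγ γ
  rw [h1, h2] at this
  simp at this

lemma mobius_infty (γ : SL2Z) : mobius γ inftyP = col1 γ := by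
  rw [← pt_one_zero, mobius_pt γ (by simp : ((1:ℤ),(0:ℤ)) ≠ 0)]
  simp [act, col1]

lemma mobius_zero (γ : SL2Z) : mobius γ zeroP = col2 γ := by
  rw [← pt_zero_one, mobius_pt γ (by simp : ((0:ℤ),(1:ℤ)) ≠ 0)]
  simp [act, col2]

end Aux

section Aux2

abbrev M2 := Matrix (Fin 2) (Fin 2) ℤ

lemma entry_mul (γ δ : SL2Z) (i j : Fin 2) :
    ((γ * δ : SL2Z) : M2) i j = (γ : M2) i 0 * (δ : M2) 0 j + (γ : M2) i 1 * (δ : M2) 1 j := by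
  rw [Matrix.SpecialLinearGroup.coe_mul, Matrix.mul_apply, Fin.sum_univ_two]

lemma Sel_entries : (Sel : M2) 0 0 = 0 ∧ (Sel : M2) 0 1 = -1 ∧ (Sel : M2) 1 0 = 1
    ∧ (Sel : M2) 1 1 = 0 := by
  refine ⟨?_, ?_, ?_, ?_⟩ <;> rfl

lemma Uel_entries : (Uel : M2) 0 0 = 0 ∧ (Uel : M2) 0 1 = 1 ∧ (Uel : M2) 1 0 = -1
    ∧ (Uel : M2) 1 1 = 1 := by
  refine ⟨?_, ?_, ?_, ?_⟩ <;> rfl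

/-- first column of γS is second column of γ, etc. -/
lemma colS1 (γ : SL2Z) : col1 (γ * Sel) = col2 γ := by
  unfold col1 col2
  rw [entry_mul, entry_mul, Sel_entries.1, Sel_entries.2.2.1]
  ring_nf

lemma colS2 (γ : SL2Z) : col2 (γ * Sel) = col1 γ := by
  unfold col1 col2
  rw [entry_mul, entry_mul, Sel_entries.2.1, Sel_entries.2.2.2]
  have : ((γ : M2) 0 0 * -1 + (γ : M2) 0 1 * 0, (γ : M2) 1 0 * -1 + (γ : M2) 1 1 * 0)
      = -(((γ : M2) 0 0, (γ : M2) 1 0)) := by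
    simp only [Prod.ext_iff, Prod.fst_neg, Prod.snd_neg]
    constructor <;> ring
  rw [this, pt_neg (col1_pair_ne γ)]

/-- the mediant vector of γ -/
def medv (γ : SL2Z) : ℤ × ℤ := ((γ : M2) 0 0 + (γ : M2) 0 1, (γ : M2) 1 0 + (γ : M2) 1 1)

lemma medv_ne (γ : SL2Z) : medv γ ≠ 0 := by
  intro h
  have h1 := congrArg Prod.fst h
  have h2 := congrArg Prod.snd h
  simp only [medv, Prod.fst_zero, Prod.snd_zero] at h1 h2
  have hd := detγ γ
  have e : (0:ℤ) = 1 := by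
    linear_combination (γ : M2) 1 0 * h1 - (γ : M2) 0 0 * h2 + hd
  exact one_ne_zero e.symm

lemma colU1 (γ : SL2Z) : col1 (γ * Uel) = col2 γ := by
  unfold col1 col2
  rw [entry_mul, entry_mul, Uel_entries.1, Uel_entries.2.2.1]
  have : ((γ : M2) 0 0 * 0 + (γ : M2) 0 1 * -1, (γ : M2) 1 0 * 0 + (γ : M2) 1 1 * -1)
      = -(((γ : M2) 0 1, (γ : M2) 1 1)) := by simp [Prod.ext_iff]
  rw [this, pt_neg (col2_pair_ne γ)]

lemma colU2 (γ : SL2Z) : col2 (γ * Uel) = pt (medv γ) := by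
  unfold col2
  rw [entry_mul, entry_mul, Uel_entries.2.1, Uel_entries.2.2.2]
  have : ((γ : M2) 0 0 * 1 + (γ : M2) 0 1 * 1, (γ : M2) 1 0 * 1 + (γ : M2) 1 1 * 1)
      = medv γ := by simp [medv]
  rw [this]

lemma colUU1 (γ : SL2Z) : col1 (γ * Uel * Uel) = pt (medv γ) := by
  rw [colU1, colU2]

lemma colUU2 (γ : SL2Z) : col2 (γ * Uel * Uel) = col1 γ := by
  rw [colU2]
  unfold col1
  have h0 : medv (γ * Uel) = (((γ : M2) 0 0, (γ : M2) 1 0)) := by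
    simp only [medv, entry_mul, Uel_entries.1, Uel_entries.2.1, Uel_entries.2.2.1,
      Uel_entries.2.2.2, Prod.ext_iff]
    constructor <;> ring
  rw [h0]

end Aux2

section Aux3

abbrev GA := MonoidAlgebra ℤ SL2Z

def sg (γ : SL2Z) : GA := MonoidAlgebra.single γ 1

/-- `Theta1` as a linear map. -/
def coeffLin : GA →ₗ[ℤ] (SL2Z →₀ ℤ) where
  toFun := MonoidAlgebra.coeff
  map_add' := MonoidAlgebra.coeff_add
  map_smul' := fun _ _ => rfl

def TH : GA →ₗ[ℤ] (P1Q →₀ ℤ) :=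
  (Finsupp.lsum ℤ fun γ => LinearMap.toSpanSingleton ℤ (P1Q →₀ ℤ)
    (Finsupp.single (col1 γ) 1 - Finsupp.single (col2 γ) 1)).comp coeffLin

lemma Theta1_eq (x : GA) : Theta1 x = TH x := by
  unfold Theta1 TH
  rw [LinearMap.comp_apply]
  erw [Finsupp.lsum_apply]
  apply Finsupp.sum_congr
  intro γ _
  rw [LinearMap.toSpanSingleton_apply, mobius_infty, mobius_zero]

lemma TH_sg (γ : SL2Z) : TH (sg γ) = Finsupp.single (col1 γ) 1 - Finsupp.single (col2 γ) 1 := by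
  unfold TH sg
  rw [LinearMap.comp_apply]
  erw [Finsupp.lsum_single, LinearMap.toSpanSingleton_apply, one_smul]

def Esub : AddSubgroup GA where
  carrier := {x | ∃ p q : GA,
    x = p * (1 + MonoidAlgebra.of ℤ SL2Z Sel) +
        q * (1 + MonoidAlgebra.of ℤ SL2Z Uel + MonoidAlgebra.of ℤ SL2Z (Uel * Uel))}
  zero_mem' := ⟨0, 0, by simp⟩
  add_mem' := by
    rintro x y ⟨p, q, rfl⟩ ⟨p', q', rfl⟩
    exact ⟨p + p', q + q', by noncomm_ring⟩
  neg_mem' := by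
    rintro x ⟨p, q, rfl⟩
    exact ⟨-p, -q, by noncomm_ring⟩

lemma single_mul_of (γ δ : SL2Z) : sg γ * MonoidAlgebra.of ℤ SL2Z δ = sg (γ * δ) := by
  unfold sg
  rw [MonoidAlgebra.of_apply, MonoidAlgebra.single_mul_single, one_mul]

lemma relS (γ : SL2Z) : sg γ + sg (γ * Sel) ∈ Esub := by
  refine ⟨sg γ, 0, ?_⟩
  rw [mul_add, mul_one, single_mul_of, zero_mul, add_zero]

lemma relU (γ : SL2Z) : sg γ + sg (γ * Uel) + sg (γ * Uel * Uel) ∈ Esub := by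
  refine ⟨0, sg γ, ?_⟩
  simp only [mul_add, mul_one, single_mul_of, zero_mul, zero_add, ← mul_assoc]

end Aux3

section Aux4

lemma isCoprime_of_det {a c b d : ℤ} (h : a * d - c * b = 1) : IsCoprime a c :=
  ⟨d, -b, by linarith⟩

lemma rep_ex (p : P1Q) : ∃ u : ℤ × ℤ,
    pt u = p ∧ IsCoprime u.1 u.2 ∧ (0 < u.2 ∨ (u.2 = 0 ∧ u.1 = 1)) := by
  have hv : p.rep ≠ 0 := Projectivization.rep_nonzero p
  have hp : Projectivization.mk ℚ p.rep hv = p := Projectivization.mk_rep p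
  by_cases h1 : p.rep 1 = 0
  · refine ⟨(1, 0), ?_, isCoprime_one_left, Or.inr ⟨rfl, rfl⟩⟩
    rw [pt_eq_mk (by simp), ← hp, Projectivization.mk_eq_mk_iff']
    have h0 : p.rep 0 ≠ 0 := by
      intro h0
      apply hv
      funext i; fin_cases i
      · exact h0
      · exact h1
    refine ⟨1 / p.rep 0, ?_⟩
    funext i; fin_cases i <;> simp [vq, h1] <;> field_simp
  · set r : ℚ := p.rep 0 / p.rep 1 with hr
    have hden : ((r.den : ℤ)) ≠ 0 := by exact_mod_cast r.den_nz
    have hpair : (r.num, (r.den : ℤ)) ≠ (0 : ℤ × ℤ) := by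
      intro h
      exact hden (congrArg Prod.snd h)
    refine ⟨(r.num, (r.den : ℤ)), ?_, ?_, Or.inl (by show (0:ℤ) < (r.den : ℤ); exact_mod_cast r.pos)⟩
    · rw [pt_eq_mk hpair, ← hp, Projectivization.mk_eq_mk_iff']
      refine ⟨(r.den : ℚ) / p.rep 1, ?_⟩
      funext i; fin_cases i
      · show (r.den : ℚ) / p.rep 1 * p.rep 0 = vq (r.num, (r.den : ℤ)) 0
        have hnum : (r.num : ℚ) = r * r.den := by
          have hd' : ((r.den : ℚ)) ≠ 0 := by exact_mod_cast r.den_nz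
          have hh := Rat.num_div_den r
          rw [div_eq_iff hd'] at hh
          exact hh
        simp only [vq]
        show (r.den : ℚ) / p.rep 1 * p.rep 0 = ((r.num : ℤ) : ℚ)
        push_cast
        rw [hnum, hr]
        field_simp
      · show (r.den : ℚ) / p.rep 1 * p.rep 1 = vq (r.num, (r.den : ℤ)) 1
        simp only [vq]
        show (r.den : ℚ) / p.rep 1 * p.rep 1 = ((r.den : ℚ))
        field_simp
    · show IsCoprime r.num ((r.den : ℤ))
      rw [Int.isCoprime_iff_gcd_eq_one]
      exact r.reduced

/-- canonical coprime integer representative, with nonneg second coordinate -/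
def repP (p : P1Q) : ℤ × ℤ := Classical.choose (rep_ex p)

lemma repP_pt (p : P1Q) : pt (repP p) = p := (Classical.choose_spec (rep_ex p)).1
lemma repP_cop (p : P1Q) : IsCoprime (repP p).1 (repP p).2 :=
  (Classical.choose_spec (rep_ex p)).2.1
lemma repP_sign (p : P1Q) : 0 < (repP p).2 ∨ ((repP p).2 = 0 ∧ (repP p).1 = 1) :=
  (Classical.choose_spec (rep_ex p)).2.2

lemma cop_ne_zero {u : ℤ × ℤ} (hu : IsCoprime u.1 u.2) : u ≠ 0 := by
  rintro rfl
  exact not_isCoprime_zero_zero hu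

lemma repP_ne (p : P1Q) : repP p ≠ 0 := cop_ne_zero (repP_cop p)

lemma coprime_rep_unique {u w : ℤ × ℤ} (hu : IsCoprime u.1 u.2) (hw : IsCoprime w.1 w.2)
    (h : pt u = pt w) : w = u ∨ w = -u := by
  rw [pt_eq_pt_iff (cop_ne_zero hu) (cop_ne_zero hw)] at h
  obtain ⟨x, y, hxy⟩ := hu
  set t : ℤ := x * w.1 + y * w.2 with ht
  have e1 : w.1 = u.1 * t := by
    have h' : w.1 = (x * u.1 + y * u.2) * w.1 := by rw [hxy]; ring
    rw [h', ht]
    linear_combination (-y) * h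
  have e2 : w.2 = u.2 * t := by
    have h' : w.2 = (x * u.1 + y * u.2) * w.2 := by rw [hxy]; ring
    rw [h', ht]
    linear_combination x * h
  have htu : IsUnit t := by
    obtain ⟨A, B, hAB⟩ := hw
    rw [e1, e2] at hAB
    exact IsUnit.of_mul_eq_one (A * u.1 + B * u.2) (by linear_combination hAB)
  rcases Int.isUnit_iff.1 htu with h1 | h1
  · left; rw [h1] at e1 e2; exact Prod.ext (by linarith) (by linarith)
  · right; rw [h1] at e1 e2
    refine Prod.ext ?_ ?_
    · show w.1 = -u.1
      linarith
    · show w.2 = -u.2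
      linarith

def nP (p : P1Q) : ℕ := (repP p).2.toNat

lemma nP_infty : nP inftyP = 0 := by
  have h : pt (repP inftyP) = pt ((1 : ℤ), (0 : ℤ)) := by
    rw [repP_pt, pt_one_zero]
  have hw : IsCoprime ((1:ℤ), (0:ℤ)).1 ((1:ℤ), (0:ℤ)).2 := isCoprime_one_left
  rcases coprime_rep_unique (repP_cop inftyP) hw h with h1 | h1 <;>
  · have h2 := congrArg Prod.snd h1.symm
    simp at h2
    simp [nP, h2]

lemma nP_eq_zero_iff (p : P1Q) : nP p = 0 ↔ p = inftyP := by
  constructor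
  · intro h
    rcases repP_sign p with hs | ⟨h2, h1⟩
    · exfalso
      have : (repP p).2.toNat ≠ 0 := by omega
      exact this h
    · have hre : repP p = (1, 0) := Prod.ext h1 h2
      rw [← repP_pt p, hre, pt_one_zero]
  · rintro rfl
    exact nP_infty

end Aux4

section Aux5

lemma eucl_ex (p : P1Q) : ∃ w : ℤ × ℤ,
    (repP p).1 * w.2 - (repP p).2 * w.1 = 1 ∧ 0 ≤ w.2 ∧
      (0 < (repP p).2 → w.2 < (repP p).2) := by
  rcases repP_sign p with hc | ⟨hc, ha⟩
  · obtain ⟨x, y, hxy⟩ := repP_cop p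
    set a := (repP p).1
    set c := (repP p).2
    have hcne : c ≠ 0 := ne_of_gt hc
    set d := x % c with hd
    have hd0 : 0 ≤ d := Int.emod_nonneg x hcne
    have hdc : d < c := Int.emod_lt_of_pos x hc
    have hdvd : c ∣ a * d - 1 := by
      have h1 : c ∣ d - x := by
        rw [hd, Int.emod_def]
        exact ⟨-(x / c), by ring⟩
      obtain ⟨k, hk⟩ := h1
      exact ⟨y * (-1) + a * k, by linear_combination a * hk + hxy⟩
    obtain ⟨b, hb⟩ := hdvd
    refine ⟨(b, d), by simpa using by linarith [hb], hd0, fun _ => hdc⟩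
  · exact ⟨(0, 1), by rw [ha, hc]; ring, zero_le_one, fun h => absurd hc (by omega)⟩

def stepP (p : P1Q) : ℤ × ℤ := Classical.choose (eucl_ex p)

lemma stepP_det (p : P1Q) :
    (repP p).1 * (stepP p).2 - (repP p).2 * (stepP p).1 = 1 :=
  (Classical.choose_spec (eucl_ex p)).1
lemma stepP_nonneg (p : P1Q) : 0 ≤ (stepP p).2 :=
  (Classical.choose_spec (eucl_ex p)).2.1
lemma stepP_lt (p : P1Q) (h : 0 < (repP p).2) : (stepP p).2 < (repP p).2 :=
  (Classical.choose_spec (eucl_ex p)).2.2 h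

lemma stepP_cop (p : P1Q) : IsCoprime (stepP p).1 (stepP p).2 := by
  have h := stepP_det p
  exact ⟨-(repP p).2, (repP p).1, by linarith⟩

def mat2 (u w : ℤ × ℤ) (h : u.1 * w.2 - u.2 * w.1 = 1) : SL2Z :=
  ⟨!![u.1, w.1; u.2, w.2], by rw [Matrix.det_fin_two_of]; linarith⟩

lemma mat2_e00 (u w : ℤ × ℤ) (h : u.1 * w.2 - u.2 * w.1 = 1) :
    ((mat2 u w h : SL2Z) : M2) 0 0 = u.1 := rfl
lemma mat2_e01 (u w : ℤ × ℤ) (h : u.1 * w.2 - u.2 * w.1 = 1) :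
    ((mat2 u w h : SL2Z) : M2) 0 1 = w.1 := rfl
lemma mat2_e10 (u w : ℤ × ℤ) (h : u.1 * w.2 - u.2 * w.1 = 1) :
    ((mat2 u w h : SL2Z) : M2) 1 0 = u.2 := rfl
lemma mat2_e11 (u w : ℤ × ℤ) (h : u.1 * w.2 - u.2 * w.1 = 1) :
    ((mat2 u w h : SL2Z) : M2) 1 1 = w.2 := rfl

lemma col1_mat2 (u w : ℤ × ℤ) (h : u.1 * w.2 - u.2 * w.1 = 1) :
    col1 (mat2 u w h) = pt u := by
  unfold col1
  rw [mat2_e00, mat2_e10]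

lemma col2_mat2 (u w : ℤ × ℤ) (h : u.1 * w.2 - u.2 * w.1 = 1) :
    col2 (mat2 u w h) = pt w := by
  unfold col2
  rw [mat2_e01, mat2_e11]

def gmatP (p : P1Q) : SL2Z := mat2 (repP p) (stepP p) (stepP_det p)
def prevP (p : P1Q) : P1Q := pt (stepP p)

lemma col1_gmatP (p : P1Q) : col1 (gmatP p) = p := by
  rw [gmatP, col1_mat2, repP_pt]
lemma col2_gmatP (p : P1Q) : col2 (gmatP p) = prevP p := by
  rw [gmatP, col2_mat2]; rfl

lemma nP_pt_cop {w : ℤ × ℤ} (hw : IsCoprime w.1 w.2) : nP (pt w) = w.2.natAbs := by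
  have h : pt (repP (pt w)) = pt w := repP_pt (pt w)
  unfold nP
  have hsgn : 0 < (repP (pt w)).2 ∨ ((repP (pt w)).2 = 0 ∧ (repP (pt w)).1 = 1) := repP_sign (pt w)
  rcases coprime_rep_unique (repP_cop (pt w)) hw h with h1 | h1
  · have h2 : w.2 = (repP (pt w)).2 := congrArg Prod.snd h1
    rw [← h2]
    omega
  · have h2 : w.2 = -(repP (pt w)).2 := by
      have := congrArg Prod.snd h1
      simpa using this
    omega

lemma nP_prevP (p : P1Q) (h : nP p ≠ 0) : nP (prevP p) < nP p := by
  have hc : 0 < (repP p).2 := by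
    rcases repP_sign p with h1 | h1
    · exact h1
    · exfalso; apply h; unfold nP; omega
  have h1 := stepP_lt p hc
  have h2 := stepP_nonneg p
  rw [prevP, nP_pt_cop (stepP_cop p)]
  unfold nP
  omega

def Xi (p : P1Q) : GA :=
  if h : nP p = 0 then 0 else sg (gmatP p) + Xi (prevP p)
termination_by nP p
decreasing_by exact nP_prevP p h

lemma Xi_zero {p : P1Q} (h : nP p = 0) : Xi p = 0 := by
  rw [Xi, dif_pos h]

lemma Xi_succ {p : P1Q} (h : nP p ≠ 0) : Xi p = sg (gmatP p) + Xi (prevP p) := by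
  rw [Xi]; rw [dif_neg h]

lemma TH_Xi (p : P1Q) : TH (Xi p) = Finsupp.single p 1 - Finsupp.single inftyP 1 := by
  by_cases h : nP p = 0
  · rw [Xi_zero h, (nP_eq_zero_iff p).1 h]
    simp
  · rw [Xi_succ h, map_add, TH_sg, col1_gmatP, col2_gmatP, TH_Xi (prevP p)]
    abel
termination_by nP p
decreasing_by exact nP_prevP p h

end Aux5


section Aux6

def Fdef (γ : SL2Z) : GA := sg γ - Xi (col1 γ) + Xi (col2 γ)

lemma FS_sum (γ : SL2Z) : Fdef γ + Fdef (γ * Sel) = sg γ + sg (γ * Sel) := by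
  unfold Fdef
  rw [colS1, colS2]
  abel

lemma memS_of {γ : SL2Z} (h : Fdef (γ * Sel) ∈ Esub) : Fdef γ ∈ Esub := by
  have h2 : Fdef γ = (Fdef γ + Fdef (γ * Sel)) - Fdef (γ * Sel) := by abel
  rw [h2, FS_sum]
  exact AddSubgroup.sub_mem _ (relS γ) h

lemma memS_to {γ : SL2Z} (h : Fdef γ ∈ Esub) : Fdef (γ * Sel) ∈ Esub := by
  have h2 : Fdef (γ * Sel) = (Fdef γ + Fdef (γ * Sel)) - Fdef γ := by abel
  rw [h2, FS_sum]
  exact AddSubgroup.sub_mem _ (relS γ) h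

lemma FU_sum (γ : SL2Z) :
    Fdef γ + Fdef (γ * Uel) + Fdef (γ * Uel * Uel)
      = sg γ + sg (γ * Uel) + sg (γ * Uel * Uel) := by
  unfold Fdef
  rw [colU1, colU2, colUU1, colUU2]
  abel

lemma mem2of3 {γ : SL2Z} (h1 : Fdef (γ * Uel) ∈ Esub) (h2 : Fdef (γ * Uel * Uel) ∈ Esub) :
    Fdef γ ∈ Esub := by
  have h3 : Fdef γ = (Fdef γ + Fdef (γ * Uel) + Fdef (γ * Uel * Uel))
      - Fdef (γ * Uel) - Fdef (γ * Uel * Uel) := by abel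
  rw [h3, FU_sum]
  exact AddSubgroup.sub_mem _ (AddSubgroup.sub_mem _ (relU γ) h1) h2

def negSL : SL2Z := ⟨!![-1, 0; 0, -1], by norm_num [Matrix.det_fin_two_of]⟩

lemma Sel_Sel : Sel * Sel = negSL := by
  apply Subtype.ext
  rw [Matrix.SpecialLinearGroup.coe_mul]
  show ((Sel : M2) * (Sel : M2)) = (negSL : M2)
  ext i j
  rw [Matrix.mul_apply, Fin.sum_univ_two]
  fin_cases i <;> fin_cases j <;> rfl

lemma relNeg (γ : SL2Z) : sg γ - sg (γ * negSL) ∈ Esub := by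
  have h1 := relS γ
  have h2 := relS (γ * Sel)
  have h3 : sg γ - sg (γ * negSL) = (sg γ + sg (γ * Sel)) - (sg (γ * Sel) + sg (γ * Sel * Sel)) := by
    rw [mul_assoc, Sel_Sel]
    abel
  rw [h3]
  exact AddSubgroup.sub_mem _ h1 h2

lemma coe_negSL : (negSL : M2) = -1 := by
  ext i j
  fin_cases i <;> fin_cases j <;> rfl

lemma eq_or_negSL_of_cols {γ δ : SL2Z} (h1 : col1 γ = col1 δ) (h2 : col2 γ = col2 δ) :
    γ = δ ∨ γ = δ * negSL := by
  have hcop1γ : IsCoprime ((γ:M2) 0 0) ((γ:M2) 1 0) := isCoprime_of_det (b := (γ:M2) 0 1) (d := (γ:M2) 1 1) (by linear_combination detγ γ)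
  have hcop2γ : IsCoprime ((γ:M2) 0 1) ((γ:M2) 1 1) := by
    refine ⟨-(γ:M2) 1 0, (γ:M2) 0 0, by linear_combination detγ γ⟩
  have hcop1δ : IsCoprime ((δ:M2) 0 0) ((δ:M2) 1 0) := isCoprime_of_det (b := (δ:M2) 0 1) (d := (δ:M2) 1 1) (by linear_combination detγ δ)
  have hcop2δ : IsCoprime ((δ:M2) 0 1) ((δ:M2) 1 1) := by
    refine ⟨-(δ:M2) 1 0, (δ:M2) 0 0, by linear_combination detγ δ⟩
  have e1 := coprime_rep_unique (u := ((γ:M2) 0 0, (γ:M2) 1 0)) (w := ((δ:M2) 0 0, (δ:M2) 1 0))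
    hcop1γ hcop1δ h1
  have e2 := coprime_rep_unique (u := ((γ:M2) 0 1, (γ:M2) 1 1)) (w := ((δ:M2) 0 1, (δ:M2) 1 1))
    hcop2γ hcop2δ h2
  have hdγ := detγ γ
  have hdδ := detγ δ
  have coe_mul_neg : (δ * negSL : SL2Z) = (⟨-(δ:M2), by
      have : (-(δ:M2)) = (δ:M2) * (-1) := (mul_neg_one _).symm
      rw [this, Matrix.det_mul, δ.2]
      simp [Matrix.det_fin_two]⟩ : SL2Z) := by
    apply Subtype.ext
    rw [Matrix.SpecialLinearGroup.coe_mul, coe_negSL]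
    show (δ:M2) * (-1) = -(δ:M2)
    exact mul_neg_one _
  rcases e1 with ha | ha <;> rcases e2 with hb | hb
  · left
    apply Subtype.ext
    ext i j
    fin_cases i <;> fin_cases j
    · exact (congrArg Prod.fst ha).symm
    · exact (congrArg Prod.fst hb).symm
    · exact (congrArg Prod.snd ha).symm
    · exact (congrArg Prod.snd hb).symm
  · exfalso
    have c1 : (δ:M2) 0 0 = (γ:M2) 0 0 := congrArg Prod.fst ha
    have c2 : (δ:M2) 1 0 = (γ:M2) 1 0 := congrArg Prod.snd ha
    have c3 : (δ:M2) 0 1 = -(γ:M2) 0 1 := by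
      have := congrArg Prod.fst hb; simpa using this
    have c4 : (δ:M2) 1 1 = -(γ:M2) 1 1 := by
      have := congrArg Prod.snd hb; simpa using this
    rw [c1, c2, c3, c4] at hdδ
    linarith [hdγ, hdδ]
  · exfalso
    have c1 : (δ:M2) 0 0 = -(γ:M2) 0 0 := by
      have := congrArg Prod.fst ha; simpa using this
    have c2 : (δ:M2) 1 0 = -(γ:M2) 1 0 := by
      have := congrArg Prod.snd ha; simpa using this
    have c3 : (δ:M2) 0 1 = (γ:M2) 0 1 := congrArg Prod.fst hb
    have c4 : (δ:M2) 1 1 = (γ:M2) 1 1 := congrArg Prod.snd hb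
    rw [c1, c2, c3, c4] at hdδ
    linarith [hdγ, hdδ]
  · right
    rw [coe_mul_neg]
    apply Subtype.ext
    show (γ : M2) = -(δ:M2)
    have c1 : (δ:M2) 0 0 = -(γ:M2) 0 0 := by
      have := congrArg Prod.fst ha; simpa using this
    have c2 : (δ:M2) 1 0 = -(γ:M2) 1 0 := by
      have := congrArg Prod.snd ha; simpa using this
    have c3 : (δ:M2) 0 1 = -(γ:M2) 0 1 := by
      have := congrArg Prod.fst hb; simpa using this
    have c4 : (δ:M2) 1 1 = -(γ:M2) 1 1 := by
      have := congrArg Prod.snd hb; simpa using this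
    ext i j
    fin_cases i <;> fin_cases j
    · show (γ:M2) 0 0 = -(δ:M2) 0 0
      rw [c1]; ring
    · show (γ:M2) 0 1 = -(δ:M2) 0 1
      rw [c3]; ring
    · show (γ:M2) 1 0 = -(δ:M2) 1 0
      rw [c2]; ring
    · show (γ:M2) 1 1 = -(δ:M2) 1 1
      rw [c4]; ring

lemma F_tree {γ : SL2Z} (hp : nP (col1 γ) ≠ 0) (h2 : col2 γ = prevP (col1 γ)) :
    Fdef γ ∈ Esub := by
  set p := col1 γ with hpdef
  have hδ1 : col1 (gmatP p) = col1 γ := col1_gmatP p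
  have hδ2 : col2 (gmatP p) = col2 γ := by rw [col2_gmatP, h2]
  have hFδ : Fdef (gmatP p) = 0 := by
    unfold Fdef
    rw [hδ1, hδ2, ← hpdef, h2, Xi_succ hp]
    abel
  rcases eq_or_negSL_of_cols hδ1.symm hδ2.symm with h | h
  · rw [h, hFδ]; exact AddSubgroup.zero_mem _
  · have hcols1 : col1 γ = col1 (gmatP p * negSL) := by rw [← h]
    have hcols2 : col2 γ = col2 (gmatP p * negSL) := by rw [← h]
    have hdiff : Fdef (gmatP p * negSL) = Fdef (gmatP p) - (sg (gmatP p) - sg (gmatP p * negSL)) := by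
      unfold Fdef
      rw [← hcols1, ← hcols2, ← hδ1, ← hδ2]
      abel
    rw [h, hdiff, hFδ]
    exact AddSubgroup.sub_mem _ (AddSubgroup.zero_mem _) (relNeg (gmatP p))

end Aux6


lemma cop_col1 (γ : SL2Z) : IsCoprime ((γ:M2) 0 0) ((γ:M2) 1 0) :=
  ⟨(γ:M2) 1 1, -(γ:M2) 0 1, by linear_combination detγ γ⟩

lemma cop_col2 (γ : SL2Z) : IsCoprime ((γ:M2) 0 1) ((γ:M2) 1 1) :=
  ⟨-(γ:M2) 1 0, (γ:M2) 0 0, by linear_combination detγ γ⟩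

lemma nP_col1 (γ : SL2Z) : nP (col1 γ) = ((γ:M2) 1 0).natAbs :=
  nP_pt_cop (cop_col1 γ)

lemma nP_col2 (γ : SL2Z) : nP (col2 γ) = ((γ:M2) 1 1).natAbs :=
  nP_pt_cop (cop_col2 γ)

lemma medv_mul_Sel (γ : SL2Z) :
    medv (γ * Sel) = ((γ:M2) 0 1 - (γ:M2) 0 0, (γ:M2) 1 1 - (γ:M2) 1 0) := by
  unfold medv
  rw [entry_mul, entry_mul, entry_mul, entry_mul, Sel_entries.1, Sel_entries.2.1,
    Sel_entries.2.2.1, Sel_entries.2.2.2]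
  refine Prod.ext ?_ ?_ <;> · show _ = _; ring

theorem claimA (γ : SL2Z) : Fdef γ ∈ Esub := by
  suffices H : ∀ k (γ : SL2Z), nP (col1 γ) + nP (col2 γ) ≤ k → Fdef γ ∈ Esub by
    exact H _ γ le_rfl
  intro k
  induction k with
  | zero =>
    intro γ hN
    exfalso
    have h1 : ((γ:M2) 1 0).natAbs = 0 := by
      have := nP_col1 γ; omega
    have h2 : ((γ:M2) 1 1).natAbs = 0 := by
      have := nP_col2 γ; omega
    have e1 : (γ:M2) 1 0 = 0 := by omega
    have e2 : (γ:M2) 1 1 = 0 := by omega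
    have := detγ γ
    rw [e1, e2] at this
    simp at this
  | succ k ih =>
    have main : ∀ γ : SL2Z, nP (col1 γ) + nP (col2 γ) ≤ k + 1 →
        nP (col2 γ) ≤ nP (col1 γ) → Fdef γ ∈ Esub := by
      intro γ hN hle
      set a := (γ:M2) 0 0 with ha
      set b := (γ:M2) 0 1 with hb
      set c := (γ:M2) 1 0 with hcc
      set d := (γ:M2) 1 1 with hdd
      have hdet : a * d - b * c = 1 := by
        have := detγ γ; linarith
      have hn1 : nP (col1 γ) = c.natAbs := nP_col1 γ
      have hn2 : nP (col2 γ) = d.natAbs := nP_col2 γ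
      by_cases hd0 : d = 0
      · -- base / tree case : second column is ∞
        have hbc : b * c = -1 := by rw [hd0] at hdet; linarith
        have hbu : IsUnit b := IsUnit.of_mul_eq_one (-c) (by linarith)
        have hc1 : c.natAbs = 1 := by
          rcases Int.isUnit_iff.1 hbu with h | h <;> rw [h] at hbc <;> omega
        have hp0 : nP (col1 γ) ≠ 0 := by omega
        have hq : col2 γ = inftyP := by
          show pt (b, d) = inftyP
          rw [hd0]
          rcases Int.isUnit_iff.1 hbu with h | h <;> rw [h]
          · exact pt_one_zero
          · have : ((-1 : ℤ), (0:ℤ)) = -((1:ℤ), (0:ℤ)) := rfl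
            rw [this, pt_neg (by simp), pt_one_zero]
        have hprev : prevP (col1 γ) = inftyP := by
          have hlt := nP_prevP (col1 γ) hp0
          apply (nP_eq_zero_iff _).1
          omega
        exact F_tree hp0 (by rw [hq, hprev])
      · -- main case
        have hcne : c ≠ 0 := by
          intro h0
          rw [h0] at hn1
          simp at hn1
          omega
        have hp0 : nP (col1 γ) ≠ 0 := by omega
        have hptu : pt (a, c) = pt (repP (col1 γ)) := by rw [repP_pt]; rfl
        have hru := coprime_rep_unique (cop_col1 γ) (repP_cop (col1 γ)) hptu
        set a' := (repP (col1 γ)).1 with ha'd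
        set c' := (repP (col1 γ)).2 with hc'd
        set b₁ := (stepP (col1 γ)).1 with hb1d
        set d₁ := (stepP (col1 γ)).2 with hd1d
        have hst : a' * d₁ - c' * b₁ = 1 := stepP_det _
        have hd₁0 : 0 ≤ d₁ := stepP_nonneg _
        have hc'pos : 0 < c' := by
          rcases repP_sign (col1 γ) with h | h
          · exact h
          · exfalso; apply hp0; unfold nP; omega
        have hd₁c : d₁ < c' := stepP_lt _ hc'pos
        obtain ⟨s, hs, ha', hc'⟩ : ∃ s : ℤ, (s = 1 ∨ s = -1) ∧ a' = s * a ∧ c' = s * c := by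
          rcases hru with h | h
          · refine ⟨1, Or.inl rfl, ?_, ?_⟩
            · have : a' = a := congrArg Prod.fst h
              rw [this]; ring
            · have : c' = c := congrArg Prod.snd h
              rw [this]; ring
          · refine ⟨-1, Or.inr rfl, ?_, ?_⟩
            · have : a' = -a := by have := congrArg Prod.fst h; simpa using this
              rw [this]; ring
            · have : c' = -c := by have := congrArg Prod.snd h; simpa using this
              rw [this]; ring
        have hs2 : s * s = 1 := by rcases hs with rfl | rfl <;> norm_num
        have hcalc : a' * (d - s * d₁) = c' * (b - s * b₁) := by
          rcases hs with rfl | rfl <;> rw [ha', hc'] at hst ⊢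
          · linear_combination hdet - hst
          · linear_combination hst - hdet
        have hdvd : c' ∣ (d - s * d₁) :=
          (IsCoprime.dvd_of_dvd_mul_left ((repP_cop (col1 γ)).symm)
            (Dvd.intro _ hcalc.symm))
        obtain ⟨η, hη⟩ := hdvd
        have hcabs : c' = c ∨ c' = -c := by
          rcases hs with rfl | rfl
          · left; linarith
          · right; linarith
        have hdabs : d.natAbs ≤ c.natAbs := by omega
        have hηb : η = -1 ∨ η = 0 ∨ η = 1 := by
          have hb1 : d - s * d₁ < 2 * c' := by
            have h1 : d ≤ c' := by omega
            have h2 : s * d₁ > -c' := by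
              rcases hs with rfl | rfl
              · omega
              · omega
            omega
          have hb2 : -(2 * c') < d - s * d₁ := by
            have h1 : -c' ≤ d := by omega
            have h2 : s * d₁ < c' := by
              rcases hs with rfl | rfl
              · omega
              · omega
            omega
          rw [hη] at hb1 hb2
          have e1 : η < 2 := by nlinarith
          have e2 : -2 < η := by nlinarith
          omega
        have hbEq : b - s * b₁ = a' * η := by
          have h0 : c' * (b - s * b₁) = c' * (a' * η) := by
            rw [← hcalc, hη]; ring
          exact mul_left_cancel₀ (by omega) h0
        have hηb' : η = 0 ∨ η * s = -1 ∨ η * s = 1 := by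
          rcases hs with rfl | rfl <;> rcases hηb with h | h | h <;> omega
        have hbEq' : b = s * b₁ + s * a * η := by linear_combination hbEq + η * ha'
        have hdEq' : d = s * d₁ + s * c * η := by linear_combination hη + η * hc'
        have hstep_ne : (stepP (col1 γ)) ≠ 0 := cop_ne_zero (stepP_cop (col1 γ))
        have hnprev : nP (prevP (col1 γ)) = d₁.natAbs := nP_pt_cop (stepP_cop (col1 γ))
        rcases hηb' with hη1 | hτ | hτ
        · -- η = 0 : tree case
          have hdEq : d = s * d₁ := by
            rw [hη1, mul_zero] at hη
            linarith
          have hbEq0 : b = s * b₁ := by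
            rw [hη1] at hbEq
            have h0 : b - s * b₁ = 0 := by rw [hbEq]; ring
            linarith
          have hq : col2 γ = prevP (col1 γ) := by
            show pt (b, d) = pt (stepP (col1 γ))
            rw [pt_eq_pt_iff (u := (b,d)) (by
              intro hz
              exact hd0 (congrArg Prod.snd hz)) hstep_ne]
            show b * d₁ = d * b₁
            rw [hbEq0, hdEq]; ring
          exact F_tree hp0 hq
        · -- η * s = -1 : split through the mediant of γ
          have hmv : pt (medv γ) = prevP (col1 γ) := by
            show pt (medv γ) = pt (stepP (col1 γ))
            rw [pt_eq_pt_iff (medv_ne γ) hstep_ne]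
            show (a + b) * d₁ = (c + d) * b₁
            rw [hbEq', hdEq']
            linear_combination (a * d₁ - c * b₁) * hτ
          have hNU : nP (col1 (γ * Uel)) + nP (col2 (γ * Uel)) ≤ k := by
            rw [colU1, colU2, hmv, hnprev, hn2]
            omega
          have hFU : Fdef (γ * Uel) ∈ Esub := ih _ hNU
          have hFUU : Fdef (γ * Uel * Uel) ∈ Esub := by
            apply memS_of
            apply F_tree
            · rw [colS1, colUU2]
              exact hp0
            · rw [colS2, colS1, colUU1, colUU2, hmv]
          exact mem2of3 hFU hFUU
        · -- η * s = 1 : split through the mediant of γ * Sel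
          have hmvne : ((γ:M2) 0 1 - (γ:M2) 0 0, (γ:M2) 1 1 - (γ:M2) 1 0) ≠ (0 : ℤ × ℤ) := by
            have h0 := medv_ne (γ * Sel)
            rw [medv_mul_Sel] at h0
            exact h0
          have hmv : pt ((γ:M2) 0 1 - (γ:M2) 0 0, (γ:M2) 1 1 - (γ:M2) 1 0)
              = prevP (col1 γ) := by
            show _ = pt (stepP (col1 γ))
            rw [pt_eq_pt_iff hmvne hstep_ne]
            show (b - a) * d₁ = (d - c) * b₁
            rw [hbEq', hdEq']
            linear_combination (a * d₁ - c * b₁) * hτ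
          apply memS_of
          apply mem2of3
          · apply F_tree
            · rw [colU1, colS2]
              exact hp0
            · rw [colU1, colU2, colS2, medv_mul_Sel, hmv]
          · apply ih
            rw [colUU1, colUU2, colS1, medv_mul_Sel, hmv, hnprev, hn2]
            omega
    intro γ hN
    by_cases hc : nP (col2 γ) ≤ nP (col1 γ)
    · exact main γ hN hc
    · apply memS_of
      apply main (γ * Sel)
      · rw [colS1, colS2]; omega
      · rw [colS1, colS2]; omega


def Psi : (P1Q →₀ ℤ) →ₗ[ℤ] GA :=
  Finsupp.lsum ℤ fun p => LinearMap.toSpanSingleton ℤ _ (Xi p)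

lemma Psi_single (p : P1Q) (n : ℤ) : Psi (Finsupp.single p n) = n • Xi p := by
  unfold Psi
  erw [Finsupp.lsum_single, LinearMap.toSpanSingleton_apply]

lemma single_eq_smul_sg (γ : SL2Z) (n : ℤ) : (MonoidAlgebra.single γ n : GA) = n • sg γ := by
  unfold sg
  rw [MonoidAlgebra.smul_single, smul_eq_mul, mul_one]

/-- augmentation -/
def augH : (P1Q →₀ ℤ) →ₗ[ℤ] ℤ :=
  Finsupp.lsum ℤ fun _ => LinearMap.toSpanSingleton ℤ ℤ 1

lemma augH_eq (v : P1Q →₀ ℤ) : (Finsupp.sum v fun _ c => c) = augH v := by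
  unfold augH
  erw [Finsupp.lsum_apply]
  apply Finsupp.sum_congr
  intro p _
  rw [LinearMap.toSpanSingleton_apply, smul_eq_mul, mul_one]

lemma augH_single (p : P1Q) (n : ℤ) : augH (Finsupp.single p n) = n := by
  unfold augH
  erw [Finsupp.lsum_single, LinearMap.toSpanSingleton_apply, smul_eq_mul, mul_one]

lemma aug_TH (x : GA) : augH (TH x) = 0 := by
  induction x using MonoidAlgebra.induction_linear with
  | zero => simp
  | add f g hf hg => rw [map_add, map_add, hf, hg, add_zero]
  | single γ n =>
    rw [single_eq_smul_sg, map_zsmul, map_zsmul, TH_sg, map_sub, augH_single, augH_single]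
    simp

lemma TH_Psi (v : P1Q →₀ ℤ) :
    TH (Psi v) = v - (augH v) • Finsupp.single inftyP 1 := by
  induction v using Finsupp.induction_linear with
  | zero => simp
  | add f g hf hg =>
    rw [map_add, map_add, hf, hg, map_add, add_smul]
    abel
  | single p n =>
    rw [Psi_single, map_zsmul, TH_Xi, augH_single, smul_sub]
    rw [Finsupp.smul_single, smul_eq_mul, mul_one]

def Dmap : GA →ₗ[ℤ] GA := LinearMap.id - Psi.comp TH

lemma Dmap_apply (x : GA) : Dmap x = x - Psi (TH x) := by
  unfold Dmap
  rw [LinearMap.sub_apply, LinearMap.id_apply, LinearMap.comp_apply]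

lemma key_sub (x : GA) : x - Psi (TH x) ∈ Esub := by
  rw [← Dmap_apply]
  induction x using MonoidAlgebra.induction_linear with
  | zero => rw [map_zero]; exact AddSubgroup.zero_mem _
  | add f g hf hg =>
    rw [map_add]
    exact AddSubgroup.add_mem _ hf hg
  | single γ n =>
    have h : Dmap (MonoidAlgebra.single γ n) = n • Fdef γ := by
      rw [Dmap_apply, single_eq_smul_sg, map_zsmul, map_zsmul, TH_sg, map_sub, Psi_single,
        one_smul, Psi_single, one_smul]
      unfold Fdef
      rw [← smul_sub]
      congr 1
      abel
    rw [h]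
    exact AddSubgroup.zsmul_mem _ (claimA γ) n

lemma TH_mul_gen1 (p : GA) : TH (p * (1 + MonoidAlgebra.of ℤ SL2Z Sel)) = 0 := by
  induction p using MonoidAlgebra.induction_linear with
  | zero => rw [zero_mul, map_zero]
  | add f g hf hg => rw [add_mul, map_add, hf, hg, add_zero]
  | single γ n =>
    rw [single_eq_smul_sg, smul_mul_assoc, map_zsmul]
    have h : sg γ * (1 + MonoidAlgebra.of ℤ SL2Z Sel) = sg γ + sg (γ * Sel) := by
      rw [mul_add, mul_one, single_mul_of]
    rw [h, map_add, TH_sg, TH_sg, colS1, colS2]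
    have h2 : ((Finsupp.single (col1 γ) 1 - Finsupp.single (col2 γ) 1) +
        (Finsupp.single (col2 γ) 1 - Finsupp.single (col1 γ) 1) : P1Q →₀ ℤ) = 0 := by abel
    rw [h2, smul_zero]

lemma TH_mul_gen2 (q : GA) :
    TH (q * (1 + MonoidAlgebra.of ℤ SL2Z Uel + MonoidAlgebra.of ℤ SL2Z (Uel * Uel))) = 0 := by
  induction q using MonoidAlgebra.induction_linear with
  | zero => rw [zero_mul, map_zero]
  | add f g hf hg => rw [add_mul, map_add, hf, hg, add_zero]
  | single γ n =>
    rw [single_eq_smul_sg, smul_mul_assoc, map_zsmul]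
    have h : sg γ * (1 + MonoidAlgebra.of ℤ SL2Z Uel + MonoidAlgebra.of ℤ SL2Z (Uel * Uel))
        = sg γ + sg (γ * Uel) + sg (γ * Uel * Uel) := by
      rw [mul_add, mul_add, mul_one, single_mul_of, single_mul_of, ← mul_assoc]
    rw [h, map_add, map_add, TH_sg, TH_sg, TH_sg, colU1, colU2, colUU1, colUU2]
    have h2 : ((Finsupp.single (col1 γ) 1 - Finsupp.single (col2 γ) 1) +
        (Finsupp.single (col2 γ) 1 - Finsupp.single (pt (medv γ)) 1) +
        (Finsupp.single (pt (medv γ)) 1 - Finsupp.single (col1 γ) 1) : P1Q →₀ ℤ) = 0 := by abel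
    rw [h2, smul_zero]

/-- Manin: (i) the image of `Θ₁` is the kernel of the augmentation map of
`ℤ[ℙ¹(ℚ)]`; (ii) the kernel of `Θ₁` is the left ideal `ℤ[SL(2,ℤ)](1+S) + ℤ[SL(2,ℤ)](1+U+U²)`. -/
theorem statement14 :
    (Set.range Theta1 = {v : P1Q →₀ ℤ | (Finsupp.sum v fun _ c => c) = 0}) ∧
    (∀ x : MonoidAlgebra ℤ SL2Z, Theta1 x = 0 ↔
      ∃ p q : MonoidAlgebra ℤ SL2Z,
        x = p * (1 + MonoidAlgebra.of ℤ SL2Z Sel) +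
            q * (1 + MonoidAlgebra.of ℤ SL2Z Uel + MonoidAlgebra.of ℤ SL2Z (Uel * Uel))) := by
  constructor
  · ext v
    constructor
    · rintro ⟨x, rfl⟩
      show (Finsupp.sum (Theta1 x) fun _ c => c) = 0
      rw [Theta1_eq, augH_eq]
      exact aug_TH x
    · intro hv
      have hv0 : augH v = 0 := by rw [← augH_eq]; exact hv
      refine ⟨Psi v, ?_⟩
      rw [Theta1_eq, TH_Psi, hv0, zero_smul, sub_zero]
  · intro x
    constructor
    · intro hx
      have h0 : TH x = 0 := by rw [← Theta1_eq]; exact hx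
      have h1 := key_sub x
      rw [h0, map_zero, sub_zero] at h1
      exact h1
    · rintro ⟨p, q, rfl⟩
      rw [Theta1_eq, map_add, TH_mul_gen1, TH_mul_gen2, add_zero]
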